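/- Let ⟨S, ⊕, ∼⟩ be a procedural mixture set whose equivalence relation is the indifference relation ∼ of a binary relation ≿ on S that is a weak order, is continuous, and satisfies independence. Then ≿ is coseparable: for all a, a', b, b', ā, ā', b̄, b̄' ∈ S and all μ, μ̄ ∈ [0,1], the three indifferences μ a ⊕ (1−μ) b ∼ μ̄ ā ⊕ (1−μ̄) b̄, μ a' ⊕ (1−μ) b ∼ μ̄ ā' ⊕ (1−μ̄) b̄, and μ a ⊕ (1−μ) b' ∼ μ̄ ā ⊕ (1−μ̄) b̄' jointly imply μ a' ⊕ (1−μ) b' ∼ μ̄ ā' ⊕ (1−μ̄) b̄'. -/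

import Mathlib

open Real

/-- Binary Tsallis/Shannon entropy `H_r`. -/
noncomputable def Hent (r μ : ℝ) : ℝ :=
  if r = 1 then -(μ * Real.log μ) - (1 - μ) * Real.log (1 - μ)
  else (1 - μ ^ r - (1 - μ) ^ r) / (r - 1)

/-- Binary Rényi entropy `R_t`. -/
noncomputable def Rent (t α : ℝ) : ℝ :=
  if t = 1 then -(α * Real.log α) - (1 - α) * Real.log (1 - α)
  else Real.log (α ^ t + (1 - α) ^ t) / (1 - t)

/-- A procedural mixture set: `mix μ a b` denotes `μ a ⊕ (1-μ) b`, `approx` is the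
equivalence relation `≈`.  The axioms are connectedness, commutativity and associativity. -/
structure IsPMS {S : Type*} (mix : ℝ → S → S → S) (approx : S → S → Prop) : Prop where
  equiv : Equivalence approx
  connect : ∀ a b : S, approx (mix 1 a b) a
  comm : ∀ μ : ℝ, 0 ≤ μ → μ ≤ 1 → ∀ a b : S, approx (mix μ a b) (mix (1 - μ) b a)
  assoc : ∀ μ lam : ℝ, 0 ≤ μ → μ < 1 → 0 ≤ lam → lam < 1 → μ + lam ≤ 1 →
    ∀ a b c : S,
      approx (mix (1 - lam) (mix (μ / (1 - lam)) a b) c)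
        (mix μ a (mix ((1 - lam - μ) / (1 - μ)) b c))

/-- The indifference relation (symmetric part) of `R`. -/
def Indiff {S : Type*} (R : S → S → Prop) (a b : S) : Prop := R a b ∧ R b a

/-- The strict (asymmetric) part of `R`: `a ≻ b`. -/
def StrictRel {S : Type*} (R : S → S → Prop) (a b : S) : Prop := R a b ∧ ¬ R b a

/-- `R` is a weak order: complete and transitive. -/
def WeakOrder {S : Type*} (R : S → S → Prop) : Prop :=
  (∀ a b : S, R a b ∨ R b a) ∧ ∀ a b c : S, R a b → R b c → R a c

/-- Continuity of `R` with respect to mixture weights. -/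
def ContinuousRel {S : Type*} (mix : ℝ → S → S → S) (R : S → S → Prop) : Prop :=
  ∀ a b c : S,
    IsClosed {μ : ℝ | μ ∈ Set.Icc (0 : ℝ) 1 ∧ R (mix μ a b) c} ∧
    IsClosed {μ : ℝ | μ ∈ Set.Icc (0 : ℝ) 1 ∧ R c (mix μ a b)}

/-- The von Neumann-Morgenstern independence axiom. -/
def IndepAxiom {S : Type*} (mix : ℝ → S → S → S) (R : S → S → Prop) : Prop :=
  ∀ a a' b : S, ∀ μ : ℝ, 0 < μ → μ < 1 →
    (R a a' ↔ R (mix μ a b) (mix μ a' b))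

/-- `U` represents `R`: `a ≿ b ↔ U a ≥ U b`. -/
def Represents {S : Type*} (U : S → ℝ) (R : S → S → Prop) : Prop :=
  ∀ a b : S, R a b ↔ U b ≤ U a

/-- `U` is a mixture entropy representation of `R` with parameters `q`, `r`. -/
def MixEntRep {S : Type*} (mix : ℝ → S → S → S) (R : S → S → Prop)
    (U : S → ℝ) (q r : ℝ) : Prop :=
  Represents U R ∧
    ∀ a b : S, ∀ μ : ℝ, 0 ≤ μ → μ ≤ 1 →
      U (mix μ a b) = μ ^ r * U a + (1 - μ) ^ r * U b + q * Hent r μ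

section CosepAux

variable {S : Type*} {mix : ℝ → S → S → S} {R : S → S → Prop}

/-- Substitution in the first slot of a mixture, from independence. -/
lemma cosep_sub1 (hInd : IndepAxiom mix R) {μ : ℝ} (h0 : 0 < μ) (h1 : μ < 1)
    {c c' : S} (d : S) (h : Indiff R c c') : Indiff R (mix μ c d) (mix μ c' d) :=
  ⟨(hInd c c' d μ h0 h1).mp h.1, (hInd c' c d μ h0 h1).mp h.2⟩

/-- Converse: cancel in the first slot. -/
lemma cosep_can1 (hInd : IndepAxiom mix R) {μ : ℝ} (h0 : 0 < μ) (h1 : μ < 1)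
    {c c' d : S} (h : Indiff R (mix μ c d) (mix μ c' d)) : Indiff R c c' :=
  ⟨(hInd c c' d μ h0 h1).mpr h.1, (hInd c' c d μ h0 h1).mpr h.2⟩

/-- Substitution in the second slot of a mixture. -/
lemma cosep_sub2 (hPMS : IsPMS mix (Indiff R)) (hInd : IndepAxiom mix R)
    {μ : ℝ} (h0 : 0 < μ) (h1 : μ < 1)
    (c : S) {d d' : S} (h : Indiff R d d') : Indiff R (mix μ c d) (mix μ c d') := by
  have e1 := hPMS.comm μ h0.le h1.le c d
  have e2 := hPMS.comm μ h0.le h1.le c d'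
  have e3 : Indiff R (mix (1 - μ) d c) (mix (1 - μ) d' c) :=
    cosep_sub1 hInd (by linarith) (by linarith) c h
  exact hPMS.equiv.trans e1 (hPMS.equiv.trans e3 (hPMS.equiv.symm e2))

/-- Converse: cancel in the second slot. -/
lemma cosep_can2 (hPMS : IsPMS mix (Indiff R)) (hInd : IndepAxiom mix R)
    {μ : ℝ} (h0 : 0 < μ) (h1 : μ < 1)
    {c d d' : S} (h : Indiff R (mix μ c d) (mix μ c d')) : Indiff R d d' := by
  have e1 := hPMS.comm μ h0.le h1.le c d
  have e2 := hPMS.comm μ h0.le h1.le c d'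
  have e3 : Indiff R (mix (1 - μ) d c) (mix (1 - μ) d' c) :=
    hPMS.equiv.trans (hPMS.equiv.symm e1) (hPMS.equiv.trans h e2)
  exact cosep_can1 hInd (by linarith) (by linarith) e3

/-- `mix 0 a b ≈ b`. -/
lemma cosep_e0 (hPMS : IsPMS mix (Indiff R)) (a b : S) : Indiff R (mix 0 a b) b := by
  have h := hPMS.comm 0 le_rfl zero_le_one a b
  rw [show (1 : ℝ) - 0 = 1 by norm_num] at h
  exact hPMS.equiv.trans h (hPMS.connect b a)

/-- Transfer across the first slot. -/
lemma cosep_transfer1 (hPMS : IsPMS mix (Indiff R)) (hInd : IndepAxiom mix R)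
    {ν : ℝ} (h0 : 0 ≤ ν) (h1 : ν ≤ 1) {u u' w : S} (w' : S)
    (h : Indiff R (mix ν u w) (mix ν u' w)) :
    Indiff R (mix ν u w') (mix ν u' w') := by
  rcases eq_or_lt_of_le h0 with h0' | h0'
  · subst h0'
    exact hPMS.equiv.trans (cosep_e0 hPMS u w')
      (hPMS.equiv.symm (cosep_e0 hPMS u' w'))
  rcases eq_or_lt_of_le h1 with h1' | h1'
  · subst h1'
    have huu : Indiff R u u' :=
      hPMS.equiv.trans (hPMS.equiv.symm (hPMS.connect u w))
        (hPMS.equiv.trans h (hPMS.connect u' w))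
    exact hPMS.equiv.trans (hPMS.connect u w')
      (hPMS.equiv.trans huu (hPMS.equiv.symm (hPMS.connect u' w')))
  · exact cosep_sub1 hInd h0' h1' w' (cosep_can1 hInd h0' h1' h)

/-- Transfer across the second slot. -/
lemma cosep_transfer2 (hPMS : IsPMS mix (Indiff R)) (hInd : IndepAxiom mix R)
    {ν : ℝ} (h0 : 0 ≤ ν) (h1 : ν ≤ 1) {u w w' : S} (u' : S)
    (h : Indiff R (mix ν u w) (mix ν u w')) :
    Indiff R (mix ν u' w) (mix ν u' w') := by
  rcases eq_or_lt_of_le h0 with h0' | h0'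
  · subst h0'
    have hww : Indiff R w w' :=
      hPMS.equiv.trans (hPMS.equiv.symm (cosep_e0 hPMS u w))
        (hPMS.equiv.trans h (cosep_e0 hPMS u w'))
    exact hPMS.equiv.trans (cosep_e0 hPMS u' w)
      (hPMS.equiv.trans hww (hPMS.equiv.symm (cosep_e0 hPMS u' w')))
  rcases eq_or_lt_of_le h1 with h1' | h1'
  · subst h1'
    exact hPMS.equiv.trans (hPMS.connect u' w)
      (hPMS.equiv.symm (hPMS.connect u' w'))
  · exact cosep_sub2 hPMS hInd h0' h1' u' (cosep_can2 hPMS hInd h0' h1' h)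

/-- The medial (interchange) law for the weight `1/2`, up to indifference. -/
lemma cosep_medial (hPMS : IsPMS mix (Indiff R)) (hInd : IndepAxiom mix R)
    {μ : ℝ} (h0 : 0 < μ) (h1 : μ < 1) (p q r s : S) :
    Indiff R (mix (1/2) (mix μ p q) (mix μ r s))
      (mix μ (mix (1/2) p r) (mix (1/2) q s)) := by
  set Y := mix μ r s with hY
  set Q2 := mix (1/2) q s with hQ2
  have h2μ : (0:ℝ) < 2 - μ := by linarith
  have hne : (2:ℝ) - μ ≠ 0 := by linarith
  -- Step A : peel off p from the left-hand side
  have hA := hPMS.assoc (μ/2) (1/2) (by linarith) (by linarith) (by norm_num)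
    (by norm_num) (by linarith) p q Y
  rw [show (1:ℝ) - 1/2 = 1/2 by norm_num,
      show μ/2 / ((1:ℝ)/2) = μ by ring,
      show ((1:ℝ)/2 - μ/2) / (1 - μ/2) = (1 - μ)/(2 - μ) by
        rw [div_eq_div_iff (by linarith) (by linarith)]; ring] at hA
  -- hA : LHS ≈ mix (μ/2) p (mix B q Y), with B = (1-μ)/(2-μ)
  have hB0 : (0:ℝ) ≤ (1 - μ)/(2 - μ) := div_nonneg (by linarith) (by linarith)
  have hB1 : (1 - μ)/(2 - μ) < 1 := (div_lt_one h2μ).mpr (by linarith)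
  have hM0 : (0:ℝ) < μ/(2 - μ) := div_pos h0 h2μ
  have hM1 : μ/(2 - μ) < 1 := (div_lt_one h2μ).mpr (by linarith)
  -- Step B : commute q and Y
  have hBcomm := hPMS.comm ((1 - μ)/(2 - μ)) hB0 hB1.le q Y
  -- Step C : re-associate mix (1-B) (mix μ r s) q
  have hC := hPMS.assoc (μ/(2 - μ)) ((1 - μ)/(2 - μ)) hM0.le hM1 hB0 hB1
    (by rw [← add_div, div_le_one h2μ]; linarith) r s q
  have hq1 : (1:ℝ) - (1 - μ)/(2 - μ) = 1/(2 - μ) := by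
    rw [eq_div_iff hne, sub_mul, one_mul, div_mul_cancel₀ _ hne]; ring
  have hq2 : (1:ℝ) - μ/(2 - μ) = (2 - 2*μ)/(2 - μ) := by
    rw [eq_div_iff hne, sub_mul, one_mul, div_mul_cancel₀ _ hne]; ring
  have e1 : μ/(2 - μ) / (1 - (1 - μ)/(2 - μ)) = μ := by
    rw [hq1, div_div_eq_mul_div, div_one, div_mul_cancel₀ _ hne]
  have e2 : ((1:ℝ) - (1 - μ)/(2 - μ) - μ/(2 - μ)) / (1 - μ/(2 - μ)) = 1/2 := by
    rw [hq1, div_sub_div_same, hq2, div_div_eq_mul_div, div_mul_cancel₀ _ hne,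
      div_eq_div_iff (by intro hz; linarith : (2:ℝ) - 2*μ ≠ 0) two_ne_zero]
    ring
  rw [e1, e2] at hC
  -- commute the inner pair s q
  have hsq := hPMS.comm (1/2) (by norm_num) (by norm_num) q s
  rw [show (1:ℝ) - 1/2 = 1/2 by norm_num] at hsq
  have hC2 : Indiff R (mix (μ/(2 - μ)) r (mix (1/2) s q)) (mix (μ/(2 - μ)) r Q2) :=
    cosep_sub2 hPMS hInd hM0 hM1 r (hPMS.equiv.symm hsq)
  -- Step E : peel off p from the right-hand side
  have hE := hPMS.assoc (μ/2) (1 - μ) (by linarith) (by linarith) (by linarith)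
    (by linarith) (by linarith) p r Q2
  rw [show (1:ℝ) - (1 - μ) = μ by ring,
      show μ/2 / μ = 1/2 by
        rw [div_div, div_eq_div_iff (by intro hz; linarith : (2:ℝ)*μ ≠ 0) two_ne_zero]; ring,
      show (μ - μ/2) / (1 - μ/2) = μ/(2 - μ) by
        rw [div_eq_div_iff (by linarith) (by linarith)]; ring] at hE
  -- assemble
  have hMid : Indiff R (mix ((1 - μ)/(2 - μ)) q Y) (mix (μ/(2 - μ)) r Q2) :=
    hPMS.equiv.trans hBcomm (hPMS.equiv.trans hC hC2)
  have hSub : Indiff R (mix (μ/2) p (mix ((1 - μ)/(2 - μ)) q Y))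
      (mix (μ/2) p (mix (μ/(2 - μ)) r Q2)) :=
    cosep_sub2 hPMS hInd (by linarith) (by linarith) p hMid
  exact hPMS.equiv.trans hA (hPMS.equiv.trans hSub (hPMS.equiv.symm hE))

end CosepAux

/-- Lemma: coseparability: under the weak order, continuity and
independence axioms on a procedural mixture set whose equivalence relation is the
indifference relation of `R`, the relation is coseparable. -/
theorem coseparability
    {S : Type*} (mix : ℝ → S → S → S) (R : S → S → Prop)
    (hPMS : IsPMS mix (Indiff R))
    (hWO : WeakOrder R) (hCont : ContinuousRel mix R) (hInd : IndepAxiom mix R) :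
    ∀ (a a' b b' abar abar' bbar bbar' : S) (μ μbar : ℝ),
      0 ≤ μ → μ ≤ 1 → 0 ≤ μbar → μbar ≤ 1 →
      Indiff R (mix μ a b) (mix μbar abar bbar) →
      Indiff R (mix μ a' b) (mix μbar abar' bbar) →
      Indiff R (mix μ a b') (mix μbar abar bbar') →
      Indiff R (mix μ a' b') (mix μbar abar' bbar') := by
  intro a a' b b' abar abar' bbar bbar' μ μbar hμ0 hμ1 hν0 hν1 h1 h2 h3
  have T : ∀ {u v w : S}, Indiff R u v → Indiff R v w → Indiff R u w :=
    fun h h' => hPMS.equiv.trans h h'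
  have Sy : ∀ {u v : S}, Indiff R u v → Indiff R v u := fun h => hPMS.equiv.symm h
  rcases eq_or_lt_of_le hμ0 with h0 | h0
  · -- μ = 0 : everything on the left collapses to b, b'
    subst h0
    have hx : Indiff R b (mix μbar abar bbar) := T (Sy (cosep_e0 hPMS a b)) h1
    have hx' : Indiff R b (mix μbar abar' bbar) := T (Sy (cosep_e0 hPMS a' b)) h2
    have hbar : Indiff R (mix μbar abar bbar) (mix μbar abar' bbar) := T (Sy hx) hx'
    have hbar' : Indiff R (mix μbar abar bbar') (mix μbar abar' bbar') :=
      cosep_transfer1 hPMS hInd hν0 hν1 bbar' hbar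
    exact T (cosep_e0 hPMS a' b') (T (T (Sy (cosep_e0 hPMS a b')) h3) hbar')
  rcases eq_or_lt_of_le hμ1 with h1' | h1'
  · -- μ = 1 : everything on the left collapses to a, a'
    subst h1'
    have hx : Indiff R a (mix μbar abar bbar) := T (Sy (hPMS.connect a b)) h1
    have hy : Indiff R a (mix μbar abar bbar') := T (Sy (hPMS.connect a b')) h3
    have hbar : Indiff R (mix μbar abar bbar) (mix μbar abar bbar') := T (Sy hx) hy
    have hbar' : Indiff R (mix μbar abar' bbar) (mix μbar abar' bbar') :=
      cosep_transfer2 hPMS hInd hν0 hν1 abar' hbar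
    exact T (hPMS.connect a' b') (T (T (Sy (hPMS.connect a' b)) h2) hbar')
  rcases eq_or_lt_of_le hν0 with g0 | g0
  · -- μbar = 0
    subst g0
    have hx : Indiff R (mix μ a b) bbar := T h1 (cosep_e0 hPMS abar bbar)
    have hx' : Indiff R (mix μ a' b) bbar := T h2 (cosep_e0 hPMS abar' bbar)
    have hun : Indiff R (mix μ a b) (mix μ a' b) := T hx (Sy hx')
    have hun' : Indiff R (mix μ a b') (mix μ a' b') :=
      cosep_transfer1 hPMS hInd hμ0 hμ1 b' hun
    exact T (Sy hun') (T h3 (T (cosep_e0 hPMS abar bbar')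
      (Sy (cosep_e0 hPMS abar' bbar'))))
  rcases eq_or_lt_of_le hν1 with g1 | g1
  · -- μbar = 1
    subst g1
    have hx : Indiff R (mix μ a b) abar := T h1 (hPMS.connect abar bbar)
    have hy : Indiff R (mix μ a b') abar := T h3 (hPMS.connect abar bbar')
    have hun : Indiff R (mix μ a b) (mix μ a b') := T hx (Sy hy)
    have hun' : Indiff R (mix μ a' b) (mix μ a' b') :=
      cosep_transfer2 hPMS hInd hμ0 hμ1 a' hun
    exact T (Sy hun') (T h2 (T (hPMS.connect abar' bbar)
      (Sy (hPMS.connect abar' bbar'))))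
  · -- main case : 0 < μ < 1 and 0 < μbar < 1
    set x := mix μ a b
    set x' := mix μ a' b
    set y := mix μ a b'
    set y' := mix μ a' b'
    set xb := mix μbar abar bbar
    set xb' := mix μbar abar' bbar
    set yb := mix μbar abar bbar'
    set yb' := mix μbar abar' bbar'
    have half0 : (0:ℝ) < 1/2 := by norm_num
    have half1 : (1:ℝ)/2 < 1 := by norm_num
    -- medial on the unbarred side, two pairings
    have M1 := cosep_medial hPMS hInd h0 h1' a' b a b'
    have M2 := cosep_medial hPMS hInd h0 h1' a b a' b'
    have hacomm := hPMS.comm (1/2) (by norm_num) (by norm_num) a' a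
    rw [show (1:ℝ) - 1/2 = 1/2 by norm_num] at hacomm
    have hinner : Indiff R (mix μ (mix (1/2) a' a) (mix (1/2) b b'))
        (mix μ (mix (1/2) a a') (mix (1/2) b b')) :=
      cosep_sub1 hInd h0 h1' _ hacomm
    have key1 : Indiff R (mix (1/2) x' y) (mix (1/2) x y') :=
      T M1 (T hinner (Sy M2))
    -- medial on the barred side
    have M1b := cosep_medial hPMS hInd g0 g1 abar' bbar abar bbar'
    have M2b := cosep_medial hPMS hInd g0 g1 abar bbar abar' bbar'
    have hacommb := hPMS.comm (1/2) (by norm_num) (by norm_num) abar' abar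
    rw [show (1:ℝ) - 1/2 = 1/2 by norm_num] at hacommb
    have hinnerb : Indiff R (mix μbar (mix (1/2) abar' abar) (mix (1/2) bbar bbar'))
        (mix μbar (mix (1/2) abar abar') (mix (1/2) bbar bbar')) :=
      cosep_sub1 hInd g0 g1 _ hacommb
    have key2 : Indiff R (mix (1/2) xb' yb) (mix (1/2) xb yb') :=
      T M1b (T hinnerb (Sy M2b))
    -- substitutions using the three hypotheses
    have s1 : Indiff R (mix (1/2) x' y) (mix (1/2) xb' y) :=
      cosep_sub1 hInd half0 half1 y h2
    have s2 : Indiff R (mix (1/2) xb' y) (mix (1/2) xb' yb) :=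
      cosep_sub2 hPMS hInd half0 half1 xb' h3
    have s3 : Indiff R (mix (1/2) x y') (mix (1/2) xb y') :=
      cosep_sub1 hInd half0 half1 y' h1
    -- chain : mix ½ xb y' ≈ mix ½ xb yb'
    have chain : Indiff R (mix (1/2) xb y') (mix (1/2) xb yb') :=
      T (Sy s3) (T (Sy key1) (T s1 (T s2 key2)))
    exact cosep_can2 hPMS hInd half0 half1 chain
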